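/- arXiv:1605.06530 — 2 statements merged into one kernel-verified Lean document; each statement's English description precedes it below -/
import Mathlib

section
/- Let G be the 'ceiling fan' graph with an even number n ≥ 2 of leaves: the vertices are a hub H and n leaves, each leaf is joined to the hub by a weight-1 edge, the leaves are partitioned into n/2 pairs and the two leaves of each pair are joined by a weight-1 edge, and all other weights are zero. Then the remeeting times satisfy τ⁺_H = (9n − 3)/(n + 3) and τ⁺_L = 15n/(2(n + 3)) for every leaf L, and the critical benefit-to-cost ratio of G satisfies (b/c)* = 4(6n − 7)/(3n − 16); in particular (b/c)* → 8 as n → ∞. -/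
open Finset Filter Asymptotics

noncomputable section

namespace EvoGraph

variable {V : Type*} [Fintype V] [DecidableEq V]

/-- Weighted degree `w_i = ∑_j w_{ij}`. -/
def deg (w : V → V → ℝ) (i : V) : ℝ := ∑ j, w i j

/-- Total edge weight `W = ∑_i w_i`. -/
def Wtot (w : V → V → ℝ) : ℝ := ∑ i, deg w i

/-- Random-walk step probability `p_{ij} = w_{ij}/w_i`. -/
def step (w : V → V → ℝ) (i j : V) : ℝ := w i j / deg w i

/-- The stochastic matrix `(p_{ij})`. -/
def stepMat (w : V → V → ℝ) : Matrix V V ℝ := Matrix.of fun i j => step w i j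

/-- `n`-step probability `p^{(n)}_{ij}`: the `(i,j)` entry of the `n`-th power of `(p_{ij})`. -/
def stepN (w : V → V → ℝ) (n : ℕ) (i j : V) : ℝ := (stepMat w ^ n) i j

/-- Stationary distribution `π_i = w_i / W`. -/
def statDist (w : V → V → ℝ) (i : V) : ℝ := deg w i / Wtot w

/-- `w` is a finite connected weighted graph: symmetric nonnegative weights
(self-loops allowed), positive weighted degrees, and any two vertices joined by
a path of edges of positive weight. -/
def IsWeightedGraph (w : V → V → ℝ) : Prop :=
  (∀ i j, w i j = w j i) ∧ (∀ i j, 0 ≤ w i j) ∧ (∀ i, 0 < deg w i) ∧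
  ∀ i j : V, Relation.ReflTransGen (fun a b => 0 < w a b) i j

/-- `τ` is the (symmetric) solution of the coalescence-time system:
`τ_{ii} = 0`, and `τ_{ij} = 1 + (1/2) ∑_k (p_{ik} τ_{kj} + p_{jk} τ_{ik})` for `i ≠ j`. -/
def IsCoalescent (w : V → V → ℝ) (τ : V → V → ℝ) : Prop :=
  (∀ i j, τ i j = τ j i) ∧ (∀ i, τ i i = 0) ∧
  ∀ i j, i ≠ j →
    τ i j = 1 + (1 / 2) * ∑ k, (step w i k * τ k j + step w j k * τ i k)

/-- `τ^{(n)} = ∑_{i,j} π_i p^{(n)}_{ij} τ_{ij}`. -/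
def tauWalk (w τ : V → V → ℝ) (n : ℕ) : ℝ :=
  ∑ i, ∑ j, statDist w i * stepN w n i j * τ i j

/-- Remeeting time `τ⁺_i = 1 + ∑_j p_{ij} τ_{ij}`. -/
def remeet (w τ : V → V → ℝ) (i : V) : ℝ := 1 + ∑ j, step w i j * τ i j

/-- The "ceiling fan" with `2m` leaves: hub `none`; leaves `some (p, b)` come in
`m` pairs indexed by `p : Fin m`. Each leaf is joined to the hub by a weight-1
edge, the two leaves of each pair are joined by a weight-1 edge, and all other
weights are zero. -/
def fanW (m : ℕ) : Option (Fin m × Bool) → Option (Fin m × Bool) → ℝ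
  | none, some _ => 1
  | some _, none => 1
  | some (p, b), some (q, c) => if p = q ∧ b ≠ c then 1 else 0
  | none, none => 0

/-! ### Auxiliary material: uniqueness of coalescence times -/

lemma sum_step_eq_one {w : V → V → ℝ} (hd : ∀ i, 0 < deg w i) (i : V) :
    ∑ j, step w i j = 1 := by
  unfold step
  rw [← Finset.sum_div]
  exact div_self (hd i).ne'

lemma coalescent_le {w : V → V → ℝ}
    (h0 : ∀ i j, 0 ≤ w i j) (hd : ∀ i, 0 < deg w i)
    (hconn : ∀ i j, Relation.ReflTransGen (fun a b => 0 < w a b) i j)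
    {τ τ' : V → V → ℝ} (hτ : IsCoalescent w τ) (hτ' : IsCoalescent w τ') :
    ∀ i j, τ i j ≤ τ' i j := by
  obtain ⟨-, hτd, hτe⟩ := hτ
  obtain ⟨-, hτd', hτe'⟩ := hτ'
  set d : V → V → ℝ := fun i j => τ i j - τ' i j with hdd
  have hsnn : ∀ i k, 0 ≤ step w i k := fun i k => div_nonneg (h0 i k) (hd i).le
  have hde : ∀ i j, i ≠ j →
      d i j = (1/2) * ∑ k, (step w i k * d k j + step w j k * d i k) := by
    intro i j hij
    have h1 : ∑ k, (step w i k * d k j + step w j k * d i k)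
        = ∑ k, (step w i k * τ k j + step w j k * τ i k)
          - ∑ k, (step w i k * τ' k j + step w j k * τ' i k) := by
      rw [← Finset.sum_sub_distrib]
      exact Finset.sum_congr rfl fun k _ => by simp only [hdd]; ring
    have h2 : d i j = τ i j - τ' i j := rfl
    rw [h2, hτe i j hij, hτe' i j hij, h1]
    ring
  intro i j
  obtain ⟨⟨i0, j0⟩, -, hmax⟩ := Finset.exists_max_image (Finset.univ : Finset (V × V))
    (fun p => d p.1 p.2) ⟨(i, j), Finset.mem_univ _⟩
  set M := d i0 j0 with hM
  have hMle : ∀ a b, d a b ≤ M := fun a b => hmax (a, b) (Finset.mem_univ _)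
  have key : ∀ a b, a ≠ b → d a b = M → ∀ k, 0 < w a k → d k b = M := by
    intro a b hab habM k hk
    have hsum : ∑ k', (step w a k' * (M - d k' b) + step w b k' * (M - d a k')) = 0 := by
      have expand : ∀ k', step w a k' * (M - d k' b) + step w b k' * (M - d a k')
          = (step w a k' + step w b k') * M
            - (step w a k' * d k' b + step w b k' * d a k') := fun k' => by ring
      rw [Finset.sum_congr rfl fun k' _ => expand k', Finset.sum_sub_distrib]
      have e1 : ∑ k', (step w a k' + step w b k') * M = 2 * M := by
        rw [← Finset.sum_mul, Finset.sum_add_distrib, sum_step_eq_one hd,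
          sum_step_eq_one hd]
        ring
      have e2 : ∑ k', (step w a k' * d k' b + step w b k' * d a k') = 2 * d a b := by
        rw [hde a b hab]
        ring
      rw [e1, e2, habM]
      ring
    have hnn : ∀ k' ∈ Finset.univ,
        0 ≤ step w a k' * (M - d k' b) + step w b k' * (M - d a k') := by
      intro k' _
      exact add_nonneg (mul_nonneg (hsnn a k') (sub_nonneg.2 (hMle k' b)))
        (mul_nonneg (hsnn b k') (sub_nonneg.2 (hMle a k')))
    have hz := (Finset.sum_eq_zero_iff_of_nonneg hnn).1 hsum k (Finset.mem_univ k)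
    have h1 : 0 ≤ step w a k * (M - d k b) :=
      mul_nonneg (hsnn a k) (sub_nonneg.2 (hMle k b))
    have h2 : 0 ≤ step w b k * (M - d a k) :=
      mul_nonneg (hsnn b k) (sub_nonneg.2 (hMle a k))
    have h3 : step w a k * (M - d k b) = 0 := by linarith
    have hpos : 0 < step w a k := div_pos hk (hd a)
    have h4 : M - d k b = 0 := by
      rcases mul_eq_zero.1 h3 with h | h
      · exact absurd h hpos.ne'
      · exact h
    linarith
  have reach : ∀ a b, Relation.ReflTransGen (fun x y => 0 < w x y) a b →
      d a b = M → d b b = M := by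
    intro a b hab
    induction hab using Relation.ReflTransGen.head_induction_on with
    | refl => exact fun h => h
    | @head x y hxy hyb ih =>
      intro hxM
      by_cases hxb : x = b
      · rw [hxb] at hxM; exact hxM
      · exact ih (key x b hxb hxM y hxy)
  have hM0 : M = 0 := by
    have := reach i0 j0 (hconn i0 j0) rfl
    have hz : d j0 j0 = 0 := by simp only [hdd]; rw [hτd j0, hτd' j0]; ring
    rw [this] at hz
    exact hz
  have := hMle i j
  rw [hM0] at this
  have : τ i j - τ' i j ≤ 0 := this
  linarith

lemma coalescent_unique {w : V → V → ℝ}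
    (h0 : ∀ i j, 0 ≤ w i j) (hd : ∀ i, 0 < deg w i)
    (hconn : ∀ i j, Relation.ReflTransGen (fun a b => 0 < w a b) i j)
    {τ τ' : V → V → ℝ} (hτ : IsCoalescent w τ) (hτ' : IsCoalescent w τ') :
    τ = τ' := by
  funext i j
  exact le_antisymm (coalescent_le h0 hd hconn hτ hτ' i j)
    (coalescent_le h0 hd hconn hτ' hτ i j)

/-! ### Sum helpers -/

lemma sum_point {α : Type*} [Fintype α] [DecidableEq α] (a : α) (c : ℝ) (g : α → ℝ) :
    ∑ x, (if x = a then c else 0) * g x = c * g a := by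
  rw [Finset.sum_eq_single a (fun b _ hb => by simp [hb])
    (fun h => absurd (Finset.mem_univ a) h)]
  simp

lemma sum_leaves_const (m : ℕ) (c : ℝ) : ∑ _L : Fin m × Bool, c = (2 * m) * c := by
  rw [Finset.sum_const, Finset.card_univ, Fintype.card_prod, Fintype.card_fin,
    Fintype.card_bool, nsmul_eq_mul]
  push_cast
  ring

/-! ### Basic fan graph computations -/

variable {m : ℕ}

lemma fanW_nn : fanW m none none = 0 := rfl

lemma fanW_ns (L : Fin m × Bool) : fanW m none (some L) = 1 := rfl

lemma fanW_sn (L : Fin m × Bool) : fanW m (some L) none = 1 := by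
  rcases L with ⟨p, b⟩; rfl

lemma partner_comm (L L' : Fin m × Bool) :
    (L = (L'.1, !L'.2)) ↔ (L' = (L.1, !L.2)) := by
  rcases L with ⟨p, b⟩; rcases L' with ⟨q, c⟩
  cases b <;> cases c <;> simp [Prod.ext_iff, eq_comm]

lemma fanW_ss (L L' : Fin m × Bool) :
    fanW m (some L) (some L') = if L' = (L.1, !L.2) then 1 else 0 := by
  rcases L with ⟨p, b⟩; rcases L' with ⟨q, c⟩
  show (if p = q ∧ b ≠ c then (1:ℝ) else 0) = _
  refine if_congr ?_ rfl rfl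
  cases b <;> cases c <;> simp [Prod.ext_iff, eq_comm]

lemma deg_none : deg (fanW m) none = 2 * m := by
  unfold deg
  rw [Fintype.sum_option]
  simp only [fanW_nn, fanW_ns]
  rw [sum_leaves_const]
  ring

lemma deg_some (L : Fin m × Bool) : deg (fanW m) (some L) = 2 := by
  unfold deg
  rw [Fintype.sum_option]
  simp only [fanW_sn, fanW_ss]
  rw [Finset.sum_ite_eq' Finset.univ ((L.1, !L.2)) (fun _ => (1:ℝ))]
  simp
  norm_num


lemma step_nn : step (fanW m) none none = 0 := by
  unfold step; rw [fanW_nn]; simp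

lemma step_ns (L : Fin m × Bool) : step (fanW m) none (some L) = 1 / (2 * m) := by
  unfold step; rw [fanW_ns, deg_none]

lemma step_sn (L : Fin m × Bool) : step (fanW m) (some L) none = 1 / 2 := by
  unfold step; rw [fanW_sn, deg_some]

lemma step_ss (L L' : Fin m × Bool) :
    step (fanW m) (some L) (some L') = if L' = (L.1, !L.2) then 1/2 else 0 := by
  unfold step
  rw [fanW_ss, deg_some]
  split <;> norm_num

lemma step_ss' (L L' : Fin m × Bool) :
    step (fanW m) (some L) (some L') = if L = (L'.1, !L'.2) then 1/2 else 0 := by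
  rw [step_ss]
  exact if_congr (partner_comm L L').symm rfl rfl

lemma fanW_nonneg : ∀ i j, 0 ≤ fanW m i j := by
  intro i j
  cases i <;> cases j
  · rw [fanW_nn]
  · rw [fanW_ns]; norm_num
  · rw [fanW_sn]; norm_num
  · rw [fanW_ss]; split <;> norm_num

lemma fan_deg_pos (hm : 1 ≤ m) : ∀ i, 0 < deg (fanW m) i := by
  intro i
  cases i
  · rw [deg_none]
    have : (1:ℝ) ≤ m := by exact_mod_cast hm
    linarith
  · rw [deg_some]; norm_num

lemma fan_conn : ∀ i j : Option (Fin m × Bool),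
    Relation.ReflTransGen (fun a b => 0 < fanW m a b) i j := by
  have h1 : ∀ i : Option (Fin m × Bool),
      Relation.ReflTransGen (fun a b => 0 < fanW m a b) i none := by
    intro i
    cases i
    · exact Relation.ReflTransGen.refl
    · exact Relation.ReflTransGen.single (by rw [fanW_sn]; norm_num)
  have h2 : ∀ j : Option (Fin m × Bool),
      Relation.ReflTransGen (fun a b => 0 < fanW m a b) none j := by
    intro j
    cases j
    · exact Relation.ReflTransGen.refl
    · exact Relation.ReflTransGen.single (by rw [fanW_ns]; norm_num)
  exact fun i j => (h1 i).trans (h2 j)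

/-! ### The explicit coalescence times on the fan -/

def fA (m : ℕ) : ℝ := (16 * m - 6) / (2 * m + 3)
def fX (m : ℕ) : ℝ := (10 * m) / (2 * m + 3)
def fY (m : ℕ) : ℝ := (20 * m) / (2 * m + 3)

def fanTau (m : ℕ) : Option (Fin m × Bool) → Option (Fin m × Bool) → ℝ
  | none, none => 0
  | none, some _ => fA m
  | some _, none => fA m
  | some L, some L' => if L = L' then 0 else if L.1 = L'.1 then fX m else fY m

lemma fanTau_nn : fanTau m none none = 0 := rfl
lemma fanTau_ns (L : Fin m × Bool) : fanTau m none (some L) = fA m := rfl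
lemma fanTau_sn (L : Fin m × Bool) : fanTau m (some L) none = fA m := rfl
lemma fanTau_ss (L L' : Fin m × Bool) :
    fanTau m (some L) (some L') =
      if L = L' then 0 else if L.1 = L'.1 then fX m else fY m := rfl

lemma fanTau_symm (i j : Option (Fin m × Bool)) : fanTau m i j = fanTau m j i := by
  cases i with
  | none => cases j with
    | none => rfl
    | some L => rfl
  | some L => cases j with
    | none => rfl
    | some L' =>
      rw [fanTau_ss, fanTau_ss]
      by_cases h1 : L = L'
      · rw [if_pos h1, if_pos h1.symm]
      · have h1' : L' ≠ L := fun h => h1 h.symm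
        by_cases h2 : L.1 = L'.1
        · rw [if_neg h1, if_neg h1', if_pos h2, if_pos h2.symm]
        · rw [if_neg h1, if_neg h1', if_neg h2, if_neg (fun h => h2 h.symm)]

lemma fanTau_diag (i : Option (Fin m × Bool)) : fanTau m i i = 0 := by
  cases i with
  | none => rfl
  | some L => rw [fanTau_ss, if_pos rfl]

lemma fanTau_self (L : Fin m × Bool) : fanTau m (some L) (some L) = 0 :=
  fanTau_diag (some L)

lemma fanTau_partner (L : Fin m × Bool) :
    fanTau m (some L) (some (L.1, !L.2)) = fX m := by
  rcases L with ⟨p, b⟩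
  rw [fanTau_ss, if_neg, if_pos rfl]
  cases b <;> simp [Prod.ext_iff]

lemma fanTau_ss_eq (L L' : Fin m × Bool) :
    fanTau m (some L) (some L') =
      fY m + (if L' = L then -(fY m) else 0)
        + (if L' = (L.1, !L.2) then fX m - fY m else 0) := by
  rcases L with ⟨p, b⟩; rcases L' with ⟨q, c⟩
  rw [fanTau_ss]
  by_cases h1 : p = q
  · subst h1
    cases b <;> cases c <;> simp [Prod.ext_iff] <;> ring
  · have hA : ¬((p, b) = (q, c)) := by simp [Prod.ext_iff, h1]
    have hB : ¬((q, c) = (p, b)) := by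
      simp only [Prod.ext_iff, not_and]
      intro h
      exact absurd h.symm h1
    have hC : ¬((q, c) = (p, !b)) := by
      simp only [Prod.ext_iff, not_and]
      intro h
      exact absurd h.symm h1
    rw [if_neg hA, if_neg h1, if_neg hB, if_neg hC]
    ring

lemma sum_fanTau_row (L : Fin m × Bool) :
    ∑ L' : Fin m × Bool, fanTau m (some L) (some L') =
      (2 * m) * fY m + (-(fY m)) + (fX m - fY m) := by
  rw [Finset.sum_congr rfl (fun L' _ => fanTau_ss_eq L L'),
    Finset.sum_add_distrib, Finset.sum_add_distrib, sum_leaves_const,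
    Finset.sum_ite_eq' Finset.univ L (fun _ => -(fY m)),
    Finset.sum_ite_eq' Finset.univ (L.1, !L.2) (fun _ => fX m - fY m)]
  simp

/-! ### The explicit τ is coalescent -/

theorem fanTau_coal (hm : 1 ≤ m) : IsCoalescent (fanW m) (fanTau m) := by
  have hm' : (0:ℝ) < m := by exact_mod_cast hm
  have hden : (2 * (m:ℝ) + 3) ≠ 0 := by positivity
  refine ⟨fanTau_symm, fanTau_diag, ?_⟩
  have eqH : ∀ L : Fin m × Bool, fanTau m none (some L) =
      1 + (1/2) * ∑ k, (step (fanW m) none k * fanTau m k (some L)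
        + step (fanW m) (some L) k * fanTau m none k) := by
    intro L
    rw [Fintype.sum_option, step_nn, fanTau_nn, Finset.sum_add_distrib]
    have T1 : ∑ L' : Fin m × Bool,
        step (fanW m) none (some L') * fanTau m (some L') (some L)
        = (1/(2*m)) * ((2 * m) * fY m + (-(fY m)) + (fX m - fY m)) := by
      rw [Finset.sum_congr rfl
        (fun L' _ => by rw [step_ns, fanTau_symm] :
          ∀ L' ∈ Finset.univ, step (fanW m) none (some L') * fanTau m (some L') (some L)
            = (1/(2*(m:ℝ))) * fanTau m (some L) (some L')),
        ← Finset.mul_sum, sum_fanTau_row]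
    have T2 : ∑ L' : Fin m × Bool,
        step (fanW m) (some L) (some L') * fanTau m none (some L')
        = (1/2) * fA m := by
      rw [Finset.sum_congr rfl
        (fun L' _ => by rw [step_ss, fanTau_ns] :
          ∀ L' ∈ Finset.univ, step (fanW m) (some L) (some L') * fanTau m none (some L')
            = (if L' = (L.1, !L.2) then (1/2:ℝ) else 0) * fA m),
        sum_point]
    rw [T1, T2, fanTau_ns]
    unfold fA fX fY
    field_simp
    ring
  have eqLL : ∀ L L' : Fin m × Bool, L ≠ L' → fanTau m (some L) (some L') =
      1 + (1/2) * ∑ k, (step (fanW m) (some L) k * fanTau m k (some L')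
        + step (fanW m) (some L') k * fanTau m (some L) k) := by
    intro L L' hne
    rw [Fintype.sum_option, step_sn, step_sn, fanTau_ns, fanTau_sn,
      Finset.sum_add_distrib]
    have T1 : ∑ k : Fin m × Bool,
        step (fanW m) (some L) (some k) * fanTau m (some k) (some L')
        = (1/2) * fanTau m (some (L.1, !L.2)) (some L') := by
      rw [Finset.sum_congr rfl
        (fun k _ => by rw [step_ss] :
          ∀ k ∈ Finset.univ, step (fanW m) (some L) (some k) * fanTau m (some k) (some L')
            = (if k = (L.1, !L.2) then (1/2:ℝ) else 0) * fanTau m (some k) (some L')),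
        sum_point]
    have T2 : ∑ k : Fin m × Bool,
        step (fanW m) (some L') (some k) * fanTau m (some L) (some k)
        = (1/2) * fanTau m (some L) (some (L'.1, !L'.2)) := by
      have e : ∀ k ∈ Finset.univ,
          step (fanW m) (some L') (some k) * fanTau m (some L) (some k)
            = (if k = (L'.1, !L'.2) then (1/2:ℝ) else 0) * fanTau m (some L) (some k) := by
        intro k _; rw [step_ss]
      rw [Finset.sum_congr rfl e]
      rw [show (fun k : Fin m × Bool => (if k = (L'.1, !L'.2) then (1/2:ℝ) else 0)
        * fanTau m (some L) (some k)) = fun k => (if k = (L'.1, !L'.2) then (1/2:ℝ) else 0)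
        * (fun k' => fanTau m (some L) (some k')) k from rfl]
      exact sum_point _ _ _
    rw [T1, T2]
    rcases L with ⟨p, b⟩; rcases L' with ⟨q, c⟩
    by_cases hpq : p = q
    · subst hpq
      have hbc : b ≠ c := fun h => hne (by rw [h])
      have hc : c = !b := by cases b <;> cases c <;> simp_all
      subst hc
      rw [show ((p, !b).1, !(p, !b).2) = (p, b) by simp]
      rw [fanTau_self, fanTau_self]
      rw [show fanTau m (some (p, b)) (some (p, !b)) = fX m from fanTau_partner (p, b)]
      unfold fA fX
      field_simp
      ring
    · have e1 : fanTau m (some (p, b)) (some (q, c)) = fY m := by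
        rw [fanTau_ss, if_neg (by simp [Prod.ext_iff, hpq]), if_neg hpq]
      have e2 : fanTau m (some ((p, b).1, !(p, b).2)) (some (q, c)) = fY m := by
        rw [fanTau_ss, if_neg (by simp [Prod.ext_iff, hpq]), if_neg hpq]
      have e3 : fanTau m (some (p, b)) (some ((q, c).1, !(q, c).2)) = fY m := by
        rw [fanTau_ss, if_neg (by simp [Prod.ext_iff, hpq]), if_neg hpq]
      rw [e1, e2, e3]
      unfold fA fY
      field_simp
      ring
  intro i j hij
  match i, j with
  | none, none => exact absurd rfl hij
  | none, some L => exact eqH L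
  | some L, none =>
    have hs : ∑ k, (step (fanW m) (some L) k * fanTau m k none
        + step (fanW m) none k * fanTau m (some L) k)
        = ∑ k, (step (fanW m) none k * fanTau m k (some L)
        + step (fanW m) (some L) k * fanTau m none k) := by
      refine Finset.sum_congr rfl fun k _ => ?_
      rw [fanTau_symm k none, fanTau_symm (some L) k, fanTau_symm k (some L),
        fanTau_symm none k]
      ring
    calc fanTau m (some L) none = fanTau m none (some L) := fanTau_symm _ _
      _ = 1 + (1/2) * ∑ k, (step (fanW m) none k * fanTau m k (some L)
          + step (fanW m) (some L) k * fanTau m none k) := eqH L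
      _ = 1 + (1/2) * ∑ k, (step (fanW m) (some L) k * fanTau m k none
          + step (fanW m) none k * fanTau m (some L) k) := by rw [hs]
  | some L, some L' => exact eqLL L L' (fun h => hij (by rw [h]))

/-! ### Powers of the step matrix on the fan -/

lemma stepN_one (w : V → V → ℝ) (i j : V) : stepN w 1 i j = step w i j := by
  unfold stepN
  rw [pow_one]
  rfl

lemma stepN_two (w : V → V → ℝ) (i j : V) :
    stepN w 2 i j = ∑ k, step w i k * step w k j := by
  unfold stepN
  rw [sq, Matrix.mul_apply]
  rfl

lemma stepN_three (w : V → V → ℝ) (i j : V) :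
    stepN w 3 i j = ∑ k, stepN w 2 i k * step w k j := by
  unfold stepN
  rw [pow_succ, Matrix.mul_apply]
  rfl

lemma p2_nn (hm : 1 ≤ m) : stepN (fanW m) 2 none none = 1/2 := by
  have hm' : (m:ℝ) ≠ 0 := by
    have : (0:ℝ) < m := by exact_mod_cast hm
    linarith
  rw [stepN_two, Fintype.sum_option, step_nn]
  simp only [step_ns, step_sn]
  rw [sum_leaves_const]
  field_simp
  ring

lemma p2_ns (hm : 1 ≤ m) (L : Fin m × Bool) :
    stepN (fanW m) 2 none (some L) = 1/(4*m) := by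
  have hm' : (m:ℝ) ≠ 0 := by
    have : (0:ℝ) < m := by exact_mod_cast hm
    linarith
  rw [stepN_two, Fintype.sum_option, step_nn]
  simp only [step_ns, step_ss']
  rw [← Finset.mul_sum, Finset.sum_ite_eq' Finset.univ (L.1, !L.2) (fun _ => (1/2:ℝ))]
  simp only [Finset.mem_univ, if_true]
  field_simp
  ring

lemma p2_sn (L : Fin m × Bool) : stepN (fanW m) 2 (some L) none = 1/4 := by
  rw [stepN_two, Fintype.sum_option, step_nn]
  simp only [step_ss, step_sn]
  rw [sum_point]
  norm_num

lemma p2_ss (hm : 1 ≤ m) (L L' : Fin m × Bool) :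
    stepN (fanW m) 2 (some L) (some L') = 1/(4*m) + (if L' = L then 1/4 else 0) := by
  have hm' : (m:ℝ) ≠ 0 := by
    have : (0:ℝ) < m := by exact_mod_cast hm
    linarith
  rw [stepN_two, Fintype.sum_option, step_sn, step_ns]
  simp only [step_ss]
  rw [sum_point]
  have : ((L.1, !L.2).1, !(L.1, !L.2).2) = L := by
    rcases L with ⟨p, b⟩
    simp
  rw [this]
  by_cases h : L' = L
  · rw [if_pos h, if_pos h]
    field_simp
    ring
  · rw [if_neg h, if_neg h]
    field_simp
    ring

lemma p3_ns (hm : 1 ≤ m) (L : Fin m × Bool) :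
    stepN (fanW m) 3 none (some L) = 3/(8*m) := by
  have hm' : (m:ℝ) ≠ 0 := by
    have : (0:ℝ) < m := by exact_mod_cast hm
    linarith
  rw [stepN_three, Fintype.sum_option, p2_nn hm, step_ns]
  simp only [p2_ns hm, step_ss']
  rw [← Finset.mul_sum, Finset.sum_ite_eq' Finset.univ (L.1, !L.2) (fun _ => (1/2:ℝ))]
  simp only [Finset.mem_univ, if_true]
  field_simp
  ring

lemma p3_sn (hm : 1 ≤ m) (L : Fin m × Bool) :
    stepN (fanW m) 3 (some L) none = 3/8 := by
  have hm' : (m:ℝ) ≠ 0 := by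
    have : (0:ℝ) < m := by exact_mod_cast hm
    linarith
  rw [stepN_three, Fintype.sum_option, step_nn, mul_zero]
  simp only [p2_ss hm, step_sn, add_mul]
  rw [Finset.sum_add_distrib, sum_leaves_const]
  have : ∑ k : Fin m × Bool, (if k = L then (1/4:ℝ) else 0) * (1/2)
      = (1/4) * (1/2) := sum_point L (1/4) (fun _ => 1/2)
  rw [this]
  field_simp
  ring

lemma p3_ss (hm : 1 ≤ m) (L L' : Fin m × Bool) :
    stepN (fanW m) 3 (some L) (some L')
      = 1/(4*m) + (if L' = (L.1, !L.2) then 1/8 else 0) := by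
  have hm' : (m:ℝ) ≠ 0 := by
    have : (0:ℝ) < m := by exact_mod_cast hm
    linarith
  rw [stepN_three, Fintype.sum_option, p2_sn, step_ns]
  simp only [p2_ss hm, step_ss', add_mul]
  rw [Finset.sum_add_distrib, ← Finset.mul_sum,
    Finset.sum_ite_eq' Finset.univ (L'.1, !L'.2) (fun _ => (1/2:ℝ))]
  have : ∑ k : Fin m × Bool, (if k = L then (1/4:ℝ) else 0)
      * (if k = (L'.1, !L'.2) then (1/2:ℝ) else 0)
      = (1/4) * (if L = (L'.1, !L'.2) then (1/2:ℝ) else 0) :=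
    sum_point L (1/4) (fun k => if k = (L'.1, !L'.2) then (1/2:ℝ) else 0)
  rw [this]
  simp only [Finset.mem_univ, if_true]
  rw [if_congr (partner_comm L L') rfl rfl]
  by_cases h : L' = (L.1, !L.2)
  · rw [if_pos h, if_pos h]
    field_simp
    ring
  · rw [if_neg h, if_neg h]
    field_simp
    ring

/-! ### Stationary distribution on the fan -/

lemma Wtot_fan : Wtot (fanW m) = 6 * m := by
  unfold Wtot
  rw [Fintype.sum_option, deg_none]
  simp only [deg_some]
  rw [sum_leaves_const]
  ring

lemma statDist_none : statDist (fanW m) none = (2*m)/(6*m) := by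
  unfold statDist
  rw [deg_none, Wtot_fan]

lemma statDist_some (L : Fin m × Bool) : statDist (fanW m) (some L) = 2/(6*m) := by
  unfold statDist
  rw [deg_some, Wtot_fan]

/-! ### Row sums against the coalescence times -/

lemma g1H (hm : 1 ≤ m) :
    ∑ j, step (fanW m) none j * fanTau m none j = fA m := by
  have hm' : (m:ℝ) ≠ 0 := by
    have : (0:ℝ) < m := by exact_mod_cast hm
    linarith
  rw [Fintype.sum_option, step_nn, fanTau_nn]
  simp only [step_ns, fanTau_ns]
  rw [sum_leaves_const]
  field_simp
  ring

lemma g1L (L : Fin m × Bool) :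
    ∑ j, step (fanW m) (some L) j * fanTau m (some L) j = fA m / 2 + fX m / 2 := by
  rw [Fintype.sum_option, step_sn, fanTau_sn]
  simp only [step_ss]
  rw [show (fun k : Fin m × Bool => (if k = (L.1, !L.2) then (1/2:ℝ) else 0)
      * fanTau m (some L) (some k)) = fun k => (if k = (L.1, !L.2) then (1/2:ℝ) else 0)
      * (fun k' => fanTau m (some L) (some k')) k from rfl]
  rw [sum_point]
  rw [fanTau_partner]
  ring

lemma g2H (hm : 1 ≤ m) :
    ∑ j, stepN (fanW m) 2 none j * fanTau m none j = fA m / 2 := by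
  have hm' : (m:ℝ) ≠ 0 := by
    have : (0:ℝ) < m := by exact_mod_cast hm
    linarith
  rw [Fintype.sum_option, fanTau_nn, mul_zero, zero_add]
  simp only [p2_ns hm, fanTau_ns]
  rw [sum_leaves_const]
  field_simp
  ring

lemma g2L (hm : 1 ≤ m) (L : Fin m × Bool) :
    ∑ j, stepN (fanW m) 2 (some L) j * fanTau m (some L) j
      = fA m / 4 + (1/(4*m)) * ((2 * m) * fY m + (-(fY m)) + (fX m - fY m)) := by
  rw [Fintype.sum_option, p2_sn, fanTau_sn]
  simp only [p2_ss hm, add_mul]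
  rw [Finset.sum_add_distrib, ← Finset.mul_sum, sum_fanTau_row]
  have : ∑ k : Fin m × Bool, (if k = L then (1/4:ℝ) else 0) * fanTau m (some L) (some k)
      = (1/4) * fanTau m (some L) (some L) :=
    sum_point L (1/4) (fun k => fanTau m (some L) (some k))
  rw [this, fanTau_self]
  ring

lemma g3H (hm : 1 ≤ m) :
    ∑ j, stepN (fanW m) 3 none j * fanTau m none j = (3/4) * fA m := by
  have hm' : (m:ℝ) ≠ 0 := by
    have : (0:ℝ) < m := by exact_mod_cast hm
    linarith
  rw [Fintype.sum_option, fanTau_nn, mul_zero, zero_add]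
  simp only [p3_ns hm, fanTau_ns]
  rw [sum_leaves_const]
  field_simp
  ring

lemma g3L (hm : 1 ≤ m) (L : Fin m × Bool) :
    ∑ j, stepN (fanW m) 3 (some L) j * fanTau m (some L) j
      = (3/8) * fA m + (1/(4*m)) * ((2 * m) * fY m + (-(fY m)) + (fX m - fY m))
        + (1/8) * fX m := by
  rw [Fintype.sum_option, p3_sn hm, fanTau_sn]
  simp only [p3_ss hm, add_mul]
  rw [Finset.sum_add_distrib, ← Finset.mul_sum, sum_fanTau_row]
  have : ∑ k : Fin m × Bool,
      (if k = (L.1, !L.2) then (1/8:ℝ) else 0) * fanTau m (some L) (some k)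
      = (1/8) * fanTau m (some L) (some (L.1, !L.2)) :=
    sum_point (L.1, !L.2) (1/8) (fun k => fanTau m (some L) (some k))
  rw [this, fanTau_partner]
  ring

/-! ### The walk-averaged coalescence times -/

lemma tauWalk_fan (hm : 1 ≤ m) (n : ℕ) (gH gL : ℝ)
    (hH : ∑ j, stepN (fanW m) n none j * fanTau m none j = gH)
    (hL : ∀ L : Fin m × Bool,
      ∑ j, stepN (fanW m) n (some L) j * fanTau m (some L) j = gL) :
    tauWalk (fanW m) (fanTau m) n = (2*m)/(6*m) * gH + (2*m) * (2/(6*m) * gL) := by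
  unfold tauWalk
  rw [Fintype.sum_option]
  have e1 : ∑ j, statDist (fanW m) none * stepN (fanW m) n none j * fanTau m none j
      = (2*m)/(6*m) * gH := by
    rw [Finset.sum_congr rfl fun j _ =>
      (mul_assoc (statDist (fanW m) none) (stepN (fanW m) n none j) (fanTau m none j)),
      ← Finset.mul_sum, hH, statDist_none]
  have e2 : ∀ L : Fin m × Bool,
      ∑ j, statDist (fanW m) (some L) * stepN (fanW m) n (some L) j * fanTau m (some L) j
      = 2/(6*m) * gL := by
    intro L
    rw [Finset.sum_congr rfl fun j _ =>
      (mul_assoc (statDist (fanW m) (some L)) (stepN (fanW m) n (some L) j)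
        (fanTau m (some L) j)),
      ← Finset.mul_sum, hL L, statDist_some]
  rw [e1, Finset.sum_congr rfl fun L _ => e2 L, sum_leaves_const]

/-! ### The main theorem -/

/-- for the ceiling fan with `n = 2m` leaves (`n ≥ 2` even),
`τ⁺_H = (9n − 3)/(n + 3)`, `τ⁺_L = 15n/(2(n + 3))` for every leaf, and
`(b/c)* = 4(6n − 7)/(3n − 16)`, which tends to `8` as `n → ∞`. -/
theorem ceilingFan_bc (m : ℕ) (hm : 1 ≤ m)
    (τ : Option (Fin m × Bool) → Option (Fin m × Bool) → ℝ)
    (hτ : IsCoalescent (fanW m) τ) :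
    remeet (fanW m) τ none = (9 * (2 * m : ℝ) - 3) / ((2 * m : ℝ) + 3) ∧
    (∀ L : Fin m × Bool,
      remeet (fanW m) τ (some L) = 15 * (2 * m : ℝ) / (2 * ((2 * m : ℝ) + 3))) ∧
    tauWalk (fanW m) τ 2 / (tauWalk (fanW m) τ 3 - tauWalk (fanW m) τ 1) =
      4 * (6 * (2 * m : ℝ) - 7) / (3 * (2 * m : ℝ) - 16) ∧
    Tendsto
      (fun k : ℕ => 4 * (6 * (2 * k : ℝ) - 7) / (3 * (2 * k : ℝ) - 16))
      atTop (nhds 8) := by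
  have hτeq : τ = fanTau m :=
    coalescent_unique fanW_nonneg (fan_deg_pos hm) fan_conn hτ (fanTau_coal hm)
  subst hτeq
  have hm' : (0:ℝ) < m := by exact_mod_cast hm
  have hden : (2 * (m:ℝ) + 3) ≠ 0 := by positivity
  have hH1 : ∑ j, stepN (fanW m) 1 none j * fanTau m none j = fA m := by
    simp only [stepN_one]
    exact g1H hm
  have hL1 : ∀ L : Fin m × Bool,
      ∑ j, stepN (fanW m) 1 (some L) j * fanTau m (some L) j = fA m / 2 + fX m / 2 := by
    intro L
    simp only [stepN_one]
    exact g1L L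
  refine ⟨?_, ?_, ?_, ?_⟩
  · unfold remeet
    rw [g1H hm]
    unfold fA
    field_simp
    ring
  · intro L
    unfold remeet
    rw [g1L L]
    unfold fA fX
    field_simp
    ring
  · have h2 : tauWalk (fanW m) (fanTau m) 2 = (12*m-7)/(2*m+3) := by
      rw [tauWalk_fan hm 2 _ _ (g2H hm) (g2L hm)]
      unfold fA fX fY
      field_simp
      ring
    have h31 : tauWalk (fanW m) (fanTau m) 3 - tauWalk (fanW m) (fanTau m) 1
        = (3*m-8)/(2*(2*m+3)) := by
      rw [tauWalk_fan hm 3 _ _ (g3H hm) (g3L hm), tauWalk_fan hm 1 _ _ hH1 hL1]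
      unfold fA fX fY
      field_simp
      ring
    rw [h2, h31]
    have h38 : (3*(m:ℝ) - 8) ≠ 0 := by
      intro h
      have h8 : (3*m : ℕ) = 8 := by
        have : (3*(m:ℝ)) = 8 := by linarith
        exact_mod_cast this
      omega
    have h616 : (3*(2*(m:ℝ)) - 16) ≠ 0 := by
      intro h
      have h16 : (6*m : ℕ) = 16 := by
        have : (6*(m:ℝ)) = 16 := by linarith
        exact_mod_cast this
      omega
    rw [div_div_eq_mul_div, div_eq_div_iff h38 h616]
    field_simp
    ring
  · have hD : Tendsto (fun k : ℕ => 3*(2*(k:ℝ)) - 16) atTop atTop := by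
      have h6 : Tendsto (fun k : ℕ => 6*(k:ℝ)) atTop atTop :=
        (tendsto_natCast_atTop_atTop (R := ℝ)).const_mul_atTop (by norm_num)
      have h7 := tendsto_atTop_add_const_right atTop (-16 : ℝ) h6
      exact h7.congr (fun k => by ring)
    have h0 : Tendsto (fun k : ℕ => (100:ℝ) / (3*(2*(k:ℝ)) - 16)) atTop (nhds 0) :=
      Tendsto.div_atTop tendsto_const_nhds hD
    have h8 : Tendsto (fun k : ℕ => 8 + (100:ℝ)/(3*(2*(k:ℝ))-16)) atTop (nhds 8) := by
      have h8' : Tendsto (fun _ : ℕ => (8:ℝ)) atTop (nhds 8) := tendsto_const_nhds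
      have := h8'.add h0
      simpa using this
    refine Filter.Tendsto.congr' ?_ h8
    filter_upwards [eventually_ge_atTop 3] with k hk
    have hk' : (3:ℝ) ≤ k := by exact_mod_cast hk
    have hne : (3*(2*(k:ℝ)) - 16) ≠ 0 := ne_of_gt (by linarith)
    rw [eq_div_iff hne, add_mul, div_mul_cancel₀ _ hne]
    ring

end EvoGraph
end
end

section
/- Let N ≥ 4 be even and let G be the two-island graph on N vertices: the vertex set is partitioned into two islands of size N/2 each, w_{ij} = 1 for distinct vertices i, j on the same island, w_{ij} = m for vertices on different islands where 0 < m < 1, and w_{ii} = 0. Then the critical benefit-to-cost ratio of G satisfies (b/c)* = (N(1 + m) − 2)² / (4(1 − Nm)); in particular, as m → 0⁺ this tends to (N − 2)²/4. -/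
open Finset Filter Asymptotics

noncomputable section

namespace EvoGraph

variable {V : Type*} [Fintype V] [DecidableEq V]

/-- The two-island graph on `N = 2k` vertices: vertex `(b, i)` lies on island
`b : Bool`; distinct vertices on the same island are joined by weight-1 edges,
vertices on different islands by weight-`m` edges, and there are no self-loops. -/
def islandW (k : ℕ) (m : ℝ) : Bool × Fin k → Bool × Fin k → ℝ :=
  fun x y => if x.1 = y.1 then (if x.2 = y.2 then 0 else 1) else m

/- ### Auxiliary lemmas -/

lemma aux_sum_ite_master {k : ℕ} (x : Fin k) (A B : Fin k → ℝ) :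
    ∑ z : Fin k, (if x = z then A z else B z) = A x - B x + ∑ z, B z := by
  have h1 : ∀ z : Fin k, (if x = z then A z else B z)
      = B z + (if x = z then A z - B z else 0) := by intro z; split <;> ring
  rw [Finset.sum_congr rfl fun z _ => h1 z, Finset.sum_add_distrib,
    Finset.sum_ite_eq, if_pos (Finset.mem_univ x)]
  ring

lemma aux_sum_ite_master' {k : ℕ} (y : Fin k) (A B : Fin k → ℝ) :
    ∑ z : Fin k, (if z = y then A z else B z) = A y - B y + ∑ z, B z := by
  have h1 : ∀ z : Fin k, (if z = y then A z else B z)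
      = B z + (if z = y then A z - B z else 0) := by intro z; split <;> ring
  rw [Finset.sum_congr rfl fun z _ => h1 z, Finset.sum_add_distrib,
    Finset.sum_ite_eq', if_pos (Finset.mem_univ y)]
  ring

/-- The "class matrix" whose entries depend only on whether the two vertices are
equal, distinct on the same island, or on different islands. -/
def Cmat (k : ℕ) (F G H : ℝ) : Matrix (Bool × Fin k) (Bool × Fin k) ℝ :=
  Matrix.of fun i j => if i.1 = j.1 then (if i.2 = j.2 then F else G) else H

lemma Cmat_apply {k : ℕ} (F G H : ℝ) (i j : Bool × Fin k) :
    Cmat k F G H i j = if i.1 = j.1 then (if i.2 = j.2 then F else G) else H := rfl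

lemma aux_sum_Cmat_mul {k : ℕ} (F G H : ℝ) (i : Bool × Fin k) (f : Bool × Fin k → ℝ) :
    ∑ j, Cmat k F G H i j * f j
      = (F - G) * f i + G * (∑ z, f (i.1, z)) + H * (∑ z, f (!i.1, z)) := by
  obtain ⟨b, x⟩ := i
  rw [Fintype.sum_prod_type, Fintype.sum_bool]
  cases b <;>
    simp only [Cmat_apply, Bool.not_false, Bool.not_true] <;> norm_num <;>
    rw [aux_sum_ite_master] <;>
    simp only [← Finset.mul_sum, ← Finset.sum_mul, Finset.sum_const, Finset.card_univ,
      Fintype.card_fin, nsmul_eq_mul] <;> ring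

set_option linter.unreachableTactic false in
set_option linter.unusedTactic false in
lemma aux_Cmat_mul {k : ℕ} (F G H F' G' H' : ℝ) :
    Cmat k F G H * Cmat k F' G' H' =
      Cmat k (F*F' + ((k:ℝ)-1)*(G*G') + (k:ℝ)*(H*H'))
             (F*G' + G*F' + ((k:ℝ)-2)*(G*G') + (k:ℝ)*(H*H'))
             (F*H' + H*F' + ((k:ℝ)-1)*(G*H' + H*G')) := by
  ext i j
  rw [Matrix.mul_apply]
  obtain ⟨b, x⟩ := i; obtain ⟨c, y⟩ := j
  rw [Fintype.sum_prod_type, Fintype.sum_bool]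
  cases b <;> cases c <;>
      simp only [Cmat_apply, Bool.not_false, Bool.not_true] <;> norm_num <;>
    first
      | (rw [aux_sum_ite_master', aux_sum_ite_master]
         simp only [Finset.sum_const, Finset.card_univ, Fintype.card_fin, nsmul_eq_mul]
         by_cases hxy : x = y <;> simp [hxy] <;> ring)
      | (rw [aux_sum_ite_master, aux_sum_ite_master']
         simp only [Finset.sum_const, Finset.card_univ, Fintype.card_fin, nsmul_eq_mul]
         ring)
      | (rw [aux_sum_ite_master]
         simp only [Finset.sum_const, Finset.card_univ, Fintype.card_fin, nsmul_eq_mul]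
         ring)
      | (rw [aux_sum_ite_master']
         simp only [Finset.sum_const, Finset.card_univ, Fintype.card_fin, nsmul_eq_mul]
         ring)

lemma aux_Cmat_congr {k : ℕ} {A B C A' B' C' : ℝ} (h1 : A = A') (h2 : B = B') (h3 : C = C') :
    Cmat k A B C = Cmat k A' B' C' := by rw [h1, h2, h3]

lemma aux_dsum_offdiag {k : ℕ} (f e : Fin k → Fin k → ℝ) (h : ∀ x y, x ≠ y → f x y = e x y)
    (hdiagf : ∀ x, f x x = 0) :
    ∑ x : Fin k, ∑ y : Fin k, f x y = (∑ x : Fin k, ∑ y : Fin k, e x y) - ∑ x : Fin k, e x x := by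
  have h1 : ∀ x y, f x y = e x y - (if x = y then e x y else 0) := by
    intro x y; by_cases hxy : x = y
    · subst hxy; simp [hdiagf x]
    · simp [hxy, h x y hxy]
  rw [Finset.sum_congr rfl fun x _ => Finset.sum_congr rfl fun y _ => h1 x y]
  rw [Finset.sum_congr rfl fun x _ => Finset.sum_sub_distrib _ _, Finset.sum_sub_distrib]
  congr 1
  exact Finset.sum_congr rfl fun x _ => by
    rw [Finset.sum_ite_eq, if_pos (Finset.mem_univ x)]

lemma aux_dsum_helper2 {k : ℕ} (c0 c1 : ℝ) (A A' B B' : Fin k → ℝ) :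
    ∑ x : Fin k, ∑ y : Fin k, (c0 + (A y + A' x) + c1 * (B y + B' x))
      = (k:ℝ)^2*c0 + (k:ℝ)*((∑ y, A y) + (∑ x, A' x)) + c1*(k:ℝ)*((∑ y, B y) + (∑ x, B' x)) := by
  have h1 : ∀ x : Fin k, ∑ y : Fin k, (c0 + (A y + A' x) + c1 * (B y + B' x))
      = ((k:ℝ)*c0 + (∑ y, A y) + c1*(∑ y, B y)) + (k:ℝ)*A' x + (c1*(k:ℝ))*B' x := by
    intro x
    have h2 : ∀ y : Fin k, (c0 + (A y + A' x) + c1 * (B y + B' x))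
        = (c0 + A' x + c1 * B' x) + A y + c1 * B y := by intro y; ring
    rw [Finset.sum_congr rfl fun y _ => h2 y, Finset.sum_add_distrib, Finset.sum_add_distrib,
      Finset.sum_const, ← Finset.mul_sum, Finset.card_univ, Fintype.card_fin, nsmul_eq_mul]
    ring
  rw [Finset.sum_congr rfl fun x _ => h1 x, Finset.sum_add_distrib, Finset.sum_add_distrib,
    Finset.sum_const, ← Finset.mul_sum, ← Finset.mul_sum, Finset.card_univ, Fintype.card_fin,
    nsmul_eq_mul]
  ring

lemma aux_dsum_diag {k : ℕ} (c0 c1 : ℝ) (A B : Fin k → ℝ) :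
    ∑ x : Fin k, (c0 + (A x + A x) + c1 * (B x + B x))
      = (k:ℝ)*c0 + 2*(∑ x, A x) + 2*c1*(∑ x, B x) := by
  have h2 : ∀ x : Fin k, (c0 + (A x + A x) + c1 * (B x + B x))
      = c0 + 2 * A x + (2*c1) * B x := by intro x; ring
  rw [Finset.sum_congr rfl fun x _ => h2 x, Finset.sum_add_distrib, Finset.sum_add_distrib,
    Finset.sum_const, ← Finset.mul_sum, ← Finset.mul_sum, Finset.card_univ, Fintype.card_fin,
    nsmul_eq_mul]
  try ring

set_option maxHeartbeats 2000000 in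
/-- for two equal islands of size `N/2` (`N = 2k ≥ 4` even) with
migration weight `0 < m < 1`, `(b/c)* = (N(1 + m) − 2)²/(4(1 − Nm))`; as
`m → 0⁺` this tends to `(N − 2)²/4`. -/
theorem twoIslands_bc (k : ℕ) (hk : 2 ≤ k) (m : ℝ) (hm0 : 0 < m) (hm1 : m < 1)
    (τ : Bool × Fin k → Bool × Fin k → ℝ)
    (hτ : IsCoalescent (islandW k m) τ) :
    tauWalk (islandW k m) τ 2 /
        (tauWalk (islandW k m) τ 3 - tauWalk (islandW k m) τ 1) =
      ((2 * k : ℝ) * (1 + m) - 2) ^ 2 / (4 * (1 - (2 * k : ℝ) * m)) ∧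
    Tendsto
      (fun m' : ℝ => ((2 * k : ℝ) * (1 + m') - 2) ^ 2 / (4 * (1 - (2 * k : ℝ) * m')))
      (nhdsWithin 0 (Set.Ioi 0)) (nhds (((2 * k : ℝ) - 2) ^ 2 / 4)) := by
  obtain ⟨hsym, hdiag, heq⟩ := hτ
  have hK2 : (2:ℝ) ≤ (k:ℝ) := by exact_mod_cast hk
  have hK0 : (0:ℝ) < (k:ℝ) := by linarith
  have hKne : (k:ℝ) ≠ 0 := ne_of_gt hK0
  have hd0 : (0:ℝ) < (k:ℝ) - 1 + (k:ℝ) * m := by nlinarith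
  set d : ℝ := (k:ℝ) - 1 + (k:ℝ) * m with hd
  have hdne : d ≠ 0 := ne_of_gt hd0
  have hm1' : (0:ℝ) < 1 + m := by linarith
  have h1mne : (1:ℝ) + m ≠ 0 := ne_of_gt hm1'
  have hmne : m ≠ 0 := ne_of_gt hm0
  -- degrees, total weight, stationary distribution
  have hdeg : ∀ i, deg (islandW k m) i = d := by
    intro i
    have h1 : ∀ j, islandW k m i j = Cmat k 0 1 m i j * (fun _ : Bool × Fin k => (1:ℝ)) j := by
      intro j; simp [Cmat_apply, islandW]
    rw [deg, Finset.sum_congr rfl fun j _ => h1 j, aux_sum_Cmat_mul]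
    simp only [Finset.sum_const, Finset.card_univ, Fintype.card_fin, nsmul_eq_mul, hd]
    ring
  have hW : Wtot (islandW k m) = 2*(k:ℝ)*d := by
    rw [Wtot, Finset.sum_congr rfl fun i _ => hdeg i, Finset.sum_const, Finset.card_univ]
    simp only [Fintype.card_prod, Fintype.card_bool, Fintype.card_fin, nsmul_eq_mul,
      Nat.cast_mul, Nat.cast_ofNat]
  have hpi : ∀ i, statDist (islandW k m) i = 1/(2*(k:ℝ)) := by
    intro i; rw [statDist, hdeg, hW]; field_simp
  have hstep : stepMat (islandW k m) = Cmat k 0 (1/d) (m/d) := by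
    ext i j
    show step (islandW k m) i j = _
    rw [step, hdeg, Cmat_apply]
    show (if i.1 = j.1 then (if i.2 = j.2 then (0:ℝ) else 1) else m) / d = _
    split_ifs <;> simp
  -- aggregate coalescence sums
  set St : ℝ := ∑ x : Fin k, ∑ y : Fin k, τ (true, x) (true, y) with hSt_def
  set Sf : ℝ := ∑ x : Fin k, ∑ y : Fin k, τ (false, x) (false, y) with hSf_def
  set T  : ℝ := ∑ x : Fin k, ∑ y : Fin k, τ (true, x) (false, y) with hT_def
  -- the key rearranged coalescence relation
  have key : ∀ i j : Bool × Fin k, i ≠ j →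
      (2*d+2) * τ i j = 2*d + ((∑ z, τ (i.1, z) j) + (∑ z, τ (j.1, z) i))
        + m * ((∑ z, τ ((!i.1), z) j) + (∑ z, τ ((!j.1), z) i)) := by
    have hstepf : ∀ i j : Bool × Fin k, step (islandW k m) i j = Cmat k 0 (1/d) (m/d) i j := by
      intro i j; rw [← hstep]; rfl
    have hsum1 : ∀ i j : Bool × Fin k, ∑ l, step (islandW k m) i l * τ l j
        = (-(τ i j) + (∑ z, τ (i.1, z) j) + m * (∑ z, τ ((!i.1), z) j))/d := by
      intro i j
      have h1 : ∀ l, step (islandW k m) i l * τ l j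
          = Cmat k 0 (1/d) (m/d) i l * (fun l => τ l j) l := fun l => by rw [hstepf]
      rw [Finset.sum_congr rfl fun l _ => h1 l, aux_sum_Cmat_mul]
      field_simp
      ring
    have hsum2 : ∀ i j : Bool × Fin k, ∑ l, step (islandW k m) j l * τ i l
        = (-(τ i j) + (∑ z, τ (j.1, z) i) + m * (∑ z, τ ((!j.1), z) i))/d := by
      intro i j
      have h1 : ∀ l, step (islandW k m) j l * τ i l
          = Cmat k 0 (1/d) (m/d) j l * (fun l => τ i l) l := fun l => by rw [hstepf]
      have h2 : (∑ z, τ i (j.1, z)) = ∑ z, τ (j.1, z) i :=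
        Finset.sum_congr rfl fun z _ => hsym _ _
      have h3 : (∑ z, τ i ((!j.1), z)) = ∑ z, τ ((!j.1), z) i :=
        Finset.sum_congr rfl fun z _ => hsym _ _
      rw [Finset.sum_congr rfl fun l _ => h1 l, aux_sum_Cmat_mul]
      simp only [h2, h3]
      rw [hsym i j]
      field_simp
      ring
    intro i j hij
    have h := heq i j hij
    rw [Finset.sum_add_distrib, hsum1, hsum2, ← add_div] at h
    field_simp at h
    linear_combination h
  -- identifications of double sums
  have hTT1 : ∑ y : Fin k, ∑ z : Fin k, τ (true, z) (true, y) = St := by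
    rw [hSt_def]
    exact Finset.sum_congr rfl fun y _ => Finset.sum_congr rfl fun z _ => hsym _ _
  have hFF1 : ∑ y : Fin k, ∑ z : Fin k, τ (false, z) (false, y) = Sf := by
    rw [hSf_def]
    exact Finset.sum_congr rfl fun y _ => Finset.sum_congr rfl fun z _ => hsym _ _
  have hTT2 : ∑ y : Fin k, ∑ z : Fin k, τ (false, z) (true, y) = T := by
    rw [hT_def]
    exact Finset.sum_congr rfl fun y _ => Finset.sum_congr rfl fun z _ => hsym _ _
  have hFT : ∑ y : Fin k, ∑ z : Fin k, τ (true, z) (false, y) = T := by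
    rw [hT_def, Finset.sum_comm]
  -- aggregated equations
  have eq1 : (2*d+2) * St
      = ((k:ℝ)^2*(2*d) + (k:ℝ)*(St + St) + m*(k:ℝ)*(T + T))
        - ((k:ℝ)*(2*d) + 2*St + 2*m*T) := by
    have hL : ∑ x : Fin k, ∑ y : Fin k, ((2*d+2) * τ (true,x) (true,y)) = (2*d+2) * St := by
      rw [hSt_def, Finset.mul_sum]
      exact Finset.sum_congr rfl fun x _ => by rw [Finset.mul_sum]
    have hkey : ∀ x y : Fin k, x ≠ y → (2*d+2) * τ (true,x) (true,y)
        = 2*d + ((∑ z, τ (true,z) (true,y)) + (∑ z, τ (true,z) (true,x)))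
            + m * ((∑ z, τ (false,z) (true,y)) + (∑ z, τ (false,z) (true,x))) :=
      fun x y hxy => key (true,x) (true,y) (by simp [hxy])
    have h0 : ∀ x : Fin k, (2*d+2) * τ (true,x) (true,x) = 0 := fun x => by rw [hdiag]; ring
    have h := aux_dsum_offdiag _ _ hkey h0
    rw [hL, aux_dsum_helper2, aux_dsum_diag, hTT1, hTT2] at h
    exact h
  have eq2 : (2*d+2) * Sf
      = ((k:ℝ)^2*(2*d) + (k:ℝ)*(Sf + Sf) + m*(k:ℝ)*(T + T))
        - ((k:ℝ)*(2*d) + 2*Sf + 2*m*T) := by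
    have hL : ∑ x : Fin k, ∑ y : Fin k, ((2*d+2) * τ (false,x) (false,y)) = (2*d+2) * Sf := by
      rw [hSf_def, Finset.mul_sum]
      exact Finset.sum_congr rfl fun x _ => by rw [Finset.mul_sum]
    have hkey : ∀ x y : Fin k, x ≠ y → (2*d+2) * τ (false,x) (false,y)
        = 2*d + ((∑ z, τ (false,z) (false,y)) + (∑ z, τ (false,z) (false,x)))
            + m * ((∑ z, τ (true,z) (false,y)) + (∑ z, τ (true,z) (false,x))) :=
      fun x y hxy => key (false,x) (false,y) (by simp [hxy])
    have h0 : ∀ x : Fin k, (2*d+2) * τ (false,x) (false,x) = 0 := fun x => by rw [hdiag]; ring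
    have h := aux_dsum_offdiag _ _ hkey h0
    rw [hL, aux_dsum_helper2, aux_dsum_diag, hFF1, hFT] at h
    exact h
  have eq3 : (2*d+2) * T
      = (k:ℝ)^2*(2*d) + (k:ℝ)*(T + T) + m*(k:ℝ)*(Sf + St) := by
    have hL : ∑ x : Fin k, ∑ y : Fin k, ((2*d+2) * τ (true,x) (false,y)) = (2*d+2) * T := by
      rw [hT_def, Finset.mul_sum]
      exact Finset.sum_congr rfl fun x _ => by rw [Finset.mul_sum]
    have hkey : ∀ x y : Fin k, (2*d+2) * τ (true,x) (false,y)
        = 2*d + ((∑ z, τ (true,z) (false,y)) + (∑ z, τ (false,z) (true,x)))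
            + m * ((∑ z, τ (false,z) (false,y)) + (∑ z, τ (true,z) (true,x))) :=
      fun x y => key (true,x) (false,y) (by simp)
    have h : ∑ x : Fin k, ∑ y : Fin k, ((2*d+2) * τ (true,x) (false,y))
        = ∑ x : Fin k, ∑ y : Fin k, (2*d + ((∑ z, τ (true,z) (false,y)) + (∑ z, τ (false,z) (true,x)))
            + m * ((∑ z, τ (false,z) (false,y)) + (∑ z, τ (true,z) (true,x)))) :=
      Finset.sum_congr rfl fun x _ => Finset.sum_congr rfl fun y _ => hkey x y
    rw [hL, aux_dsum_helper2, hFT, hTT2, hFF1, hTT1] at h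
    exact h
  -- solve the linear system
  have hkm1 : (k:ℝ)*m + 1 ≠ 0 := by positivity
  have hSfSt : Sf = St := by
    have h : (2*((k:ℝ)*m+1)) * Sf = (2*((k:ℝ)*m+1)) * St := by
      linear_combination eq2 - eq1 + (2*Sf - 2*St) * hd
    exact mul_left_cancel₀ (by positivity) h
  have hTval : m * T = (k:ℝ) * d + m * St := by
    have h : (2*(k:ℝ)) * (m * T) = (2*(k:ℝ)) * ((k:ℝ) * d + m * St) := by
      linear_combination eq3 + (2*T - 2*(k:ℝ)*T) * hd + (k:ℝ)*m*hSfSt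
    exact mul_left_cancel₀ (by positivity) h
  have hStval : (1 + m) * St = 2*(k:ℝ)*((k:ℝ)-1)*d := by
    linear_combination (1/2 : ℝ) * eq1 + ((k:ℝ)-1) * hTval + (St - (k:ℝ)*St) * hd
  -- tauWalk in terms of the aggregates
  have key_tw : ∀ (n : ℕ) (a b c : ℝ), stepMat (islandW k m) ^ n = Cmat k a b c →
      tauWalk (islandW k m) τ n = 1/(2*(k:ℝ)) * (b * (St + Sf) + 2 * c * T) := by
    intro n a b c hPn
    have h1 : ∀ i : Bool × Fin k, ∑ j, statDist (islandW k m) i * stepN (islandW k m) n i j * τ i j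
        = (1/(2*(k:ℝ))*b) * (∑ z, τ (i.1, z) i) + (1/(2*(k:ℝ))*c) * (∑ z, τ ((!i.1), z) i) := by
      intro i
      have h2 : ∀ j, statDist (islandW k m) i * stepN (islandW k m) n i j * τ i j
          = 1/(2*(k:ℝ)) * (Cmat k a b c i j * (fun j => τ i j) j) := by
        intro j; rw [hpi, stepN, hPn]; ring
      have e1 : (∑ z, τ i (i.1, z)) = ∑ z, τ (i.1, z) i :=
        Finset.sum_congr rfl fun z _ => hsym _ _
      have e2 : (∑ z, τ i ((!i.1), z)) = ∑ z, τ ((!i.1), z) i :=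
        Finset.sum_congr rfl fun z _ => hsym _ _
      rw [Finset.sum_congr rfl fun j _ => h2 j, ← Finset.mul_sum, aux_sum_Cmat_mul]
      simp only [hdiag, e1, e2]
      ring
    have hQ : ∑ i : Bool × Fin k, (∑ z, τ (i.1, z) i) = St + Sf := by
      rw [Fintype.sum_prod_type, Fintype.sum_bool]
      show (∑ x : Fin k, ∑ z : Fin k, τ (true, z) (true, x))
          + (∑ x : Fin k, ∑ z : Fin k, τ (false, z) (false, x)) = St + Sf
      rw [hTT1, hFF1]
    have hR : ∑ i : Bool × Fin k, (∑ z, τ ((!i.1), z) i) = T + T := by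
      rw [Fintype.sum_prod_type, Fintype.sum_bool]
      show (∑ x : Fin k, ∑ z : Fin k, τ (false, z) (true, x))
          + (∑ x : Fin k, ∑ z : Fin k, τ (true, z) (false, x)) = T + T
      rw [hTT2, hFT]
    rw [tauWalk, Finset.sum_congr rfl fun i _ => h1 i, Finset.sum_add_distrib,
      ← Finset.mul_sum, ← Finset.mul_sum, hQ, hR]
    ring
  -- powers of the step matrix
  have hP1 : stepMat (islandW k m) ^ 1 = Cmat k 0 (1/d) (m/d) := by rw [pow_one, hstep]
  have htw1 := key_tw 1 _ _ _ hP1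
  have htw2 := key_tw 2 _ _ _ (by rw [sq, hstep, aux_Cmat_mul])
  have htw3 := key_tw 3 _ _ _ (by rw [pow_succ, sq, hstep, aux_Cmat_mul, aux_Cmat_mul])
  -- explicit values
  have hStv : St = 2*(k:ℝ)*((k:ℝ)-1)*d/(1+m) := by
    rw [eq_div_iff h1mne]; linear_combination hStval
  have hTv : T = (k:ℝ)*d/m + 2*(k:ℝ)*((k:ℝ)-1)*d/(1+m) := by
    field_simp
    linear_combination (1+m)*hTval + m*hStval
  have hE2 : tauWalk (islandW k m) τ 2 = 2*((k:ℝ)-1)*(1+d)/((k:ℝ)*(1+m)) := by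
    rw [htw2, hSfSt, hStv, hTv]
    field_simp
    ring
  have hdiff : tauWalk (islandW k m) τ 3 - tauWalk (islandW k m) τ 1
      = tauWalk (islandW k m) τ 2 * (1-2*(k:ℝ)*m)/d^2 := by
    rw [htw1, htw2, htw3, hSfSt, hStv, hTv]
    field_simp
    ring
  have hE2pos : 0 < tauWalk (islandW k m) τ 2 := by
    rw [hE2]
    have h1 : (0:ℝ) < 2*((k:ℝ)-1)*(1+d) := by nlinarith
    have h2 : (0:ℝ) < (k:ℝ)*(1+m) := by positivity
    exact div_pos h1 h2
  constructor
  · -- the ratio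
    rw [hdiff]
    by_cases ht : 1 - 2*(k:ℝ)*m = 0
    · rw [ht]
      simp
    · have hdne' : ((k:ℝ)-1+(k:ℝ)*m) ≠ 0 := by rw [← hd]; exact hdne
      have htw2ne : tauWalk (islandW k m) τ 2 ≠ 0 := ne_of_gt hE2pos
      rw [hd]
      field_simp
      ring
  · -- the limit
    have hc : ContinuousAt
        (fun m' : ℝ => ((2 * (k:ℝ)) * (1 + m') - 2) ^ 2 / (4 * (1 - (2 * (k:ℝ)) * m'))) 0 := by
      apply ContinuousAt.div
      · fun_prop
      · fun_prop
      · norm_num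
    refine Tendsto.mono_left ?_ nhdsWithin_le_nhds
    have h0 : (((2*(k:ℝ)) - 2)^2/4) = ((2*(k:ℝ))*(1+(0:ℝ))-2)^2/(4*(1-(2*(k:ℝ))*(0:ℝ))) := by
      norm_num
    rw [h0]
    exact hc

end EvoGraph
end
end
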